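/- Let p be a probability potential on a family of compatible frames and let Λ ≤ Θ ≤ d(p). Then: (1) [π_Λ(p)] ≤ [p_{Θ|Λ}]; (2) π_Λ(p_{Θ|Λ}) = f_{π_Λ(p)}; (3) if Λ₂ ≤ Λ₁ ≤ Θ, then p_{Θ|Λ₂} = p_{Θ|Λ₁} · p_{Λ₁|Λ₂}; (4) if Λ ≤ Θ₁ ≤ Θ, then π_{Θ₁}(p_{Θ|Λ}) = p_{Θ₁|Λ}; (5) if Θ₁ ≤ Λ₁, Λ₂ ≤ Θ, then π_{Λ₁}(p_{Θ|Λ₂} · p_{Λ₂|Θ₁}) = p_{Λ₁|Θ₁}; (6) if p₂ is a potential with d(p₂) = Λ, then (π_Θ(p₁) · p₂)_{Θ|Λ} = p₁_{Θ|Λ} · f_{p₂} for any potential p₁ with Θ ≤ d(p₁). -/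

import Mathlib

open scoped NNReal

/-- A family of compatible frames (f.c.f.): a collection of finite nonempty frames
together with (unique) refinings between them, closed under composition, containing
identities, with minimal common refinements (binary joins). -/
structure FCF where
  /-- the frames of the family -/
  Frame : Type
  /-- the elements of each frame -/
  El : Frame → Type
  elFintype : ∀ Θ, Fintype (El Θ)
  elNonempty : ∀ Θ, Nonempty (El Θ)
  /-- `le Θ Λ` holds iff the family contains a refining of `Θ` to `Λ`. -/
  le : Frame → Frame → Prop
  le_refl : ∀ Θ, le Θ Θ
  le_trans : ∀ {Θ Λ Ξ}, le Θ Λ → le Λ Ξ → le Θ Ξ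
  le_antisymm : ∀ {Θ Λ}, le Θ Λ → le Λ Θ → Θ = Λ
  /-- the (unique) refining map of `Θ` to `Λ`, when `le Θ Λ` -/
  τ : ∀ {Θ Λ}, le Θ Λ → El Θ → Set (El Λ)
  τ_nonempty : ∀ {Θ Λ} (h : le Θ Λ) (θ : El Θ), (τ h θ).Nonempty
  τ_disjoint : ∀ {Θ Λ} (h : le Θ Λ) (θ θ' : El Θ), θ ≠ θ' → τ h θ ∩ τ h θ' = ∅
  τ_cover : ∀ {Θ Λ} (h : le Θ Λ) (x : El Λ), ∃ θ, x ∈ τ h θ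
  /-- the identity refining -/
  τ_refl : ∀ {Θ} (h : le Θ Θ) (θ : El Θ), τ h θ = {θ}
  /-- closure under composition of refinings -/
  τ_comp : ∀ {Θ Λ Ξ} (h₁ : le Θ Λ) (h₂ : le Λ Ξ) (h₃ : le Θ Ξ) (θ : El Θ),
    τ h₃ θ = ⋃ lam ∈ τ h₁ θ, τ h₂ lam
  /-- identity of coarsenings: two coarsenings of a frame with the same blocks coincide -/
  coarsening_unique : ∀ {Θ₁ Θ₂ Λ} (h₁ : le Θ₁ Λ) (h₂ : le Θ₂ Λ),
    (∀ θ₁, ∃ θ₂, τ h₁ θ₁ = τ h₂ θ₂) → (∀ θ₂, ∃ θ₁, τ h₁ θ₁ = τ h₂ θ₂) → Θ₁ = Θ₂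
  /-- minimal common refinement of two frames -/
  sup : Frame → Frame → Frame
  le_sup_left : ∀ Θ Λ, le Θ (sup Θ Λ)
  le_sup_right : ∀ Θ Λ, le Λ (sup Θ Λ)
  sup_le : ∀ {Θ Λ Ξ}, le Θ Ξ → le Λ Ξ → le (sup Θ Λ) Ξ
  /-- every element of the minimal common refinement is the (unique) intersection point
  of a block of each factor -/
  sup_atom : ∀ {Θ Λ} (h₁ : le Θ (sup Θ Λ)) (h₂ : le Λ (sup Θ Λ)) (x : El (sup Θ Λ)),
    ∃ (θ : El Θ) (lam : El Λ), τ h₁ θ ∩ τ h₂ lam = {x}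

namespace FCF

instance (F : FCF) (Θ : F.Frame) : Fintype (F.El Θ) := F.elFintype Θ

instance (F : FCF) (Θ : F.Frame) : Nonempty (F.El Θ) := F.elNonempty Θ

instance instSemilatticeSup (F : FCF) : SemilatticeSup F.Frame where
  le := F.le
  le_refl := F.le_refl
  le_trans := fun _ _ _ => F.le_trans
  le_antisymm := fun _ _ => F.le_antisymm
  sup := F.sup
  le_sup_left := F.le_sup_left
  le_sup_right := F.le_sup_right
  sup_le := fun _ _ _ h h' => F.sup_le h h'

/-- the indicator potential `f_p` of the support of a potential -/
noncomputable def fpot {X : Type} (p : X → ℝ≥0) : X → ℝ≥0 := fun x =>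
  haveI := Classical.propDecidable (0 < p x)
  if 0 < p x then 1 else 0

/-- the support of a potential -/
def psupp {X : Type} (p : X → ℝ≥0) : Set X := {x | 0 < p x}

/-- the likelihood (plausibility of singletons) function of a set potential -/
noncomputable def plfn {X : Type} (m : Set X → ℝ≥0) : X → ℝ≥0 :=
  fun x => ∑ᶠ (S : Set X) (_ : x ∈ S), m S

variable (F : FCF)

/-- `θ` and `lam` are compatible: their refinings to the minimal common refinement
of the two frames intersect. -/
def compat {Θ Λ : F.Frame} (θ : F.El Θ) (lam : F.El Λ) : Prop :=
  (F.τ (F.le_sup_left Θ Λ) θ ∩ F.τ (F.le_sup_right Θ Λ) lam).Nonempty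

/-- `(θ₁, θ₂, lam) ∈ R(Θ₁, Θ₂, Λ)`: joint compatibility of a triple. -/
def compat3 {Θ₁ Θ₂ Λ : F.Frame} (θ₁ : F.El Θ₁) (θ₂ : F.El Θ₂) (lam : F.El Λ) : Prop :=
  (F.τ (F.le_trans (F.le_sup_left Θ₁ Θ₂) (F.le_sup_left (F.sup Θ₁ Θ₂) Λ)) θ₁ ∩
    F.τ (F.le_trans (F.le_sup_right Θ₁ Θ₂) (F.le_sup_left (F.sup Θ₁ Θ₂) Λ)) θ₂ ∩
    F.τ (F.le_sup_right (F.sup Θ₁ Θ₂) Λ) lam).Nonempty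

/-- `Θ₁ ⊥ Θ₂ | Λ` : conditional independence of two frames given a third,
`R_λ(Θ₁,Θ₂) = R_λ(Θ₁) × R_λ(Θ₂)` for every `λ ∈ Λ`. -/
def CondIndep (Θ₁ Θ₂ Λ : F.Frame) : Prop :=
  ∀ (lam : F.El Λ) (θ₁ : F.El Θ₁) (θ₂ : F.El Θ₂),
    F.compat3 θ₁ θ₂ lam ↔ (F.compat θ₁ lam ∧ F.compat θ₂ lam)

/-- joint compatibility of a family of elements together with `lam`. -/
def compatFam {ι : Type} {Θ : ι → F.Frame} {Λ : F.Frame}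
    (θ : ∀ i, F.El (Θ i)) (lam : F.El Λ) : Prop :=
  ∃ (Ξ : F.Frame) (hΘ : ∀ i, F.le (Θ i) Ξ) (hΛ : F.le Λ Ξ) (x : F.El Ξ),
    (∀ i, x ∈ F.τ (hΘ i) (θ i)) ∧ x ∈ F.τ hΛ lam

/-- `⊥ {Θ_i : i ∈ ι} | Λ` : conditional independence of a family of frames given `Λ`,
`R_λ(Θ₁,…,Θₙ) = R_λ(Θ₁) × ⋯ × R_λ(Θₙ)` for every `λ ∈ Λ`. -/
def CondIndepFam {ι : Type} (Θ : ι → F.Frame) (Λ : F.Frame) : Prop :=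
  ∀ (lam : F.El Λ) (θ : ∀ i, F.El (Θ i)),
    F.compatFam θ lam ↔ ∀ i, F.compat (θ i) lam

/-- `t_Λ(x)`, the unique element of the coarsening `Λ` whose block contains `x`. -/
noncomputable def proj {Λ Θ : F.Frame} (h : F.le Λ Θ) (x : F.El Θ) : F.El Λ :=
  (F.τ_cover h x).choose

/-- probability potentials on the frame `Θ` -/
abbrev Pot (Θ : F.Frame) : Type := F.El Θ → ℝ≥0

/-- the combination of two probability potentials, on the join of their domains -/
noncomputable def combine {Θ₁ Θ₂ : F.Frame} (p₁ : F.Pot Θ₁) (p₂ : F.Pot Θ₂) :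
    F.Pot (F.sup Θ₁ Θ₂) :=
  fun x => p₁ (F.proj (F.le_sup_left Θ₁ Θ₂) x) * p₂ (F.proj (F.le_sup_right Θ₁ Θ₂) x)

/-- the transport `π_Λ(p)` of a probability potential to the frame `Λ` -/
noncomputable def transport {Θ : F.Frame} (p : F.Pot Θ) (Λ : F.Frame) : F.Pot Λ :=
  fun lam => ∑ᶠ (θ : F.El Θ) (_ : F.compat θ lam), p θ

/-- the max-transport `t^max_Λ(p)` of a probability potential to the frame `Λ` -/
noncomputable def maxTransport {Θ : F.Frame} (p : F.Pot Θ) (Λ : F.Frame) : F.Pot Λ :=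
  fun lam => ⨆ (θ : F.El Θ) (_ : F.compat θ lam), p θ

/-- combination of two set potentials, on the join of their domains -/
noncomputable def setCombine {Θ₁ Θ₂ : F.Frame} (m₁ : Set (F.El Θ₁) → ℝ≥0)
    (m₂ : Set (F.El Θ₂) → ℝ≥0) : Set (F.El (F.sup Θ₁ Θ₂)) → ℝ≥0 :=
  fun S => ∑ᶠ (S₁ : Set (F.El Θ₁)) (S₂ : Set (F.El Θ₂))
    (_ : (⋃ θ ∈ S₁, F.τ (F.le_sup_left Θ₁ Θ₂) θ) ∩
         (⋃ θ ∈ S₂, F.τ (F.le_sup_right Θ₁ Θ₂) θ) = S),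
    m₁ S₁ * m₂ S₂

/-- the conditional `p_{Θ|Λ} = π_Θ(p) · (π_Λ(p))⁻¹` of `p` for `Θ` given `Λ ≤ Θ` -/
noncomputable def condl {Δ : F.Frame} (p : F.Pot Δ) {Λ Θ : F.Frame} (h : F.le Λ Θ) :
    F.Pot Θ :=
  fun θ => F.transport p Θ θ * (F.transport p Λ (F.proj h θ))⁻¹

/-- the conditional `p_{Θ|Λ} = π_{Θ∨Λ}(p) · (π_Λ(p))⁻¹` of `p` for arbitrary `Θ` given `Λ` -/
noncomputable def condl2 {Δ : F.Frame} (p : F.Pot Δ) (Θ Λ : F.Frame) :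
    F.Pot (F.sup Θ Λ) :=
  fun x => F.transport p (F.sup Θ Λ) x *
    (F.transport p Λ (F.proj (F.le_sup_right Θ Λ) x))⁻¹

/-- the solution set `s_p^Λ(lam)`: maximizers of `p` among elements compatible with `lam` -/
noncomputable def solSet {Θ : F.Frame} (p : F.Pot Θ) (Λ : F.Frame) (lam : F.El Λ) :
    Set (F.El Θ) :=
  {θ | F.compat θ lam ∧ p θ = F.maxTransport p Λ lam}

end FCF

namespace FCF

section
attribute [local instance] Classical.propDecidable

variable {F : FCF}

lemma mem_τ_proj {Λ Θ : F.Frame} (h : F.le Λ Θ) (x : F.El Θ) :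
    x ∈ F.τ h (F.proj h x) := (F.τ_cover h x).choose_spec

lemma proj_eq_of_mem {Λ Θ : F.Frame} (h : F.le Λ Θ) {x : F.El Θ} {lam : F.El Λ}
    (hx : x ∈ F.τ h lam) : F.proj h x = lam := by
  by_contra hne
  have hd := F.τ_disjoint h _ _ hne
  exact absurd (Set.mem_inter (mem_τ_proj h x) hx)
    (by rw [hd]; exact Set.notMem_empty x)

lemma proj_refl {Θ : F.Frame} (h : F.le Θ Θ) (x : F.El Θ) : F.proj h x = x :=
  proj_eq_of_mem h (by rw [F.τ_refl h x]; rfl)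

lemma proj_comp {Λ₂ Λ₁ Θ : F.Frame} (h1 : F.le Λ₂ Λ₁) (h2 : F.le Λ₁ Θ)
    (h3 : F.le Λ₂ Θ) (x : F.El Θ) :
    F.proj h3 x = F.proj h1 (F.proj h2 x) := by
  apply proj_eq_of_mem
  rw [F.τ_comp h1 h2 h3]
  exact Set.mem_biUnion (mem_τ_proj h1 _) (mem_τ_proj h2 x)

lemma compat_iff_proj {Λ Θ : F.Frame} (h : F.le Λ Θ) (θ : F.El Θ) (lam : F.El Λ) :
    F.compat θ lam ↔ F.proj h θ = lam := by
  have h1 := F.le_sup_left Θ Λ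
  have h2 := F.le_sup_right Θ Λ
  constructor
  · rintro ⟨y, hyθ, hylam⟩
    rw [F.τ_comp h h1 h2 lam] at hylam
    obtain ⟨θ', hθ', hy⟩ := Set.mem_iUnion₂.1 hylam
    have hθθ : θ' = θ := by
      by_contra hne
      have hd := F.τ_disjoint h1 θ' θ hne
      exact absurd (Set.mem_inter hy hyθ) (by rw [hd]; exact Set.notMem_empty y)
    exact proj_eq_of_mem h (hθθ ▸ hθ')
  · rintro rfl
    obtain ⟨y, hy⟩ := F.τ_nonempty h1 θ
    exact ⟨y, hy, by
      rw [F.τ_comp h h1 h2]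
      exact Set.mem_biUnion (mem_τ_proj h θ) hy⟩

lemma transport_eq {Λ Θ : F.Frame} (h : F.le Λ Θ) (p : F.Pot Θ) (lam : F.El Λ) :
    F.transport p Λ lam =
      ∑ θ ∈ Finset.univ.filter (fun θ => F.proj h θ = lam), p θ := by
  classical
  unfold transport
  rw [Finset.sum_filter, ← finsum_eq_sum_of_fintype]
  refine finsum_congr fun θ => ?_
  rw [finsum_eq_if]
  simp only [compat_iff_proj h]

lemma transport_self {Θ : F.Frame} (p : F.Pot Θ) : F.transport p Θ = p := by
  funext θ
  classical
  rw [transport_eq (F.le_refl Θ)]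
  simp [proj_refl, Finset.sum_filter, Finset.sum_ite_eq']

lemma transport_comp {Λ Θ Δ : F.Frame} (hΛΘ : F.le Λ Θ) (hΘΔ : F.le Θ Δ)
    (p : F.Pot Δ) (lam : F.El Λ) :
    F.transport p Λ lam =
      ∑ θ ∈ Finset.univ.filter (fun θ => F.proj hΛΘ θ = lam),
        F.transport p Θ θ := by
  classical
  rw [transport_eq (F.le_trans hΛΘ hΘΔ) p lam]
  have := Finset.sum_fiberwise_eq_sum_filter Finset.univ
    (Finset.univ.filter (fun θ => F.proj hΛΘ θ = lam)) (F.proj hΘΔ) p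
  simp only [Finset.filter_filter, true_and, Finset.mem_filter, Finset.mem_univ] at this
  calc ∑ θ ∈ Finset.univ.filter (fun θ => F.proj (F.le_trans hΛΘ hΘΔ) θ = lam), p θ
      = ∑ i ∈ Finset.univ.filter (fun i => F.proj hΛΘ (F.proj hΘΔ i) = lam), p i := by
        refine Finset.sum_congr (Finset.filter_congr fun x _ => ?_) fun _ _ => rfl
        rw [proj_comp hΛΘ hΘΔ]
    _ = _ := by
        rw [← this]
        exact Finset.sum_congr rfl fun θ _ => (transport_eq hΘΔ p θ).symm

lemma transport_le {Λ Θ Δ : F.Frame} (hΛΘ : F.le Λ Θ) (hΘΔ : F.le Θ Δ)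
    (p : F.Pot Δ) (θ : F.El Θ) :
    F.transport p Θ θ ≤ F.transport p Λ (F.proj hΛΘ θ) := by
  classical
  rw [transport_comp hΛΘ hΘΔ]
  exact Finset.single_le_sum (f := fun θ => F.transport p Θ θ)
    (fun _ _ => zero_le) (by simp)

lemma condl_mul {Δ Θ Λ₁ Λ₂ : F.Frame} (p : F.Pot Δ) (hΘΔ : F.le Θ Δ)
    (h21 : F.le Λ₂ Λ₁) (h1Θ : F.le Λ₁ Θ) :
    F.condl p (F.le_trans h21 h1Θ) =
      fun θ => F.condl p h1Θ θ * F.condl p h21 (F.proj h1Θ θ) := by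
  funext θ
  unfold condl
  rw [proj_comp h21 h1Θ (F.le_trans h21 h1Θ) θ]
  set q := F.transport p Θ θ with hq
  set r1 := F.transport p Λ₁ (F.proj h1Θ θ) with hr1
  set r2 := F.transport p Λ₂ (F.proj h21 (F.proj h1Θ θ)) with hr2
  rcases eq_or_ne r1 0 with h0 | h0
  · have hle := transport_le h1Θ hΘΔ p θ
    rw [← hr1, ← hq, h0] at hle
    have hq0 : q = 0 := le_zero_iff.mp hle
    simp [hq0]
  · rw [mul_assoc, ← mul_assoc r1⁻¹, inv_mul_cancel₀ h0, one_mul]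

lemma transport_condl {Δ Θ Θ₁ Λ : F.Frame} (p : F.Pot Δ) (hΘΔ : F.le Θ Δ)
    (hΛΘ : F.le Λ Θ) (hΛΘ₁ : F.le Λ Θ₁) (hΘ₁Θ : F.le Θ₁ Θ) :
    F.transport (F.condl p hΛΘ) Θ₁ = F.condl p hΛΘ₁ := by
  funext θ₁
  classical
  rw [transport_eq hΘ₁Θ]
  unfold condl
  have hcongr : ∀ θ ∈ Finset.univ.filter (fun θ => F.proj hΘ₁Θ θ = θ₁),
      F.transport p Θ θ * (F.transport p Λ (F.proj hΛΘ θ))⁻¹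
        = F.transport p Θ θ * (F.transport p Λ (F.proj hΛΘ₁ θ₁))⁻¹ := by
    intro θ hθ
    simp only [Finset.mem_filter, Finset.mem_univ, true_and] at hθ
    rw [show F.proj hΛΘ θ = F.proj hΛΘ₁ θ₁ from
      hθ ▸ proj_comp hΛΘ₁ hΘ₁Θ hΛΘ θ]
  rw [Finset.sum_congr rfl hcongr, ← Finset.sum_mul,
    ← transport_comp hΘ₁Θ hΘΔ]

/-- Basic properties of conditionals `p_{Θ|Λ}` for `Λ ≤ Θ ≤ d(p)`. -/
theorem condl_props (F : FCF) (Δ Θ Λ : F.Frame)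
    (hΛΘ : F.le Λ Θ) (hΘΔ : F.le Θ Δ) (p : F.Pot Δ) :
    -- (1) `[π_Λ(p)] ≤ [p_{Θ|Λ}]`
    ((fun θ => fpot (F.transport p Λ) (F.proj hΛΘ θ) * fpot (F.condl p hΛΘ) θ) =
      fpot (F.condl p hΛΘ)) ∧
    -- (2) `π_Λ(p_{Θ|Λ}) = f_{π_Λ(p)}`
    (F.transport (F.condl p hΛΘ) Λ = fpot (F.transport p Λ)) ∧
    -- (3) if `Λ₂ ≤ Λ₁ ≤ Θ` then `p_{Θ|Λ₂} = p_{Θ|Λ₁} · p_{Λ₁|Λ₂}`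
    (∀ (Λ₁ Λ₂ : F.Frame) (h21 : F.le Λ₂ Λ₁) (h1Θ : F.le Λ₁ Θ),
      F.condl p (F.le_trans h21 h1Θ) =
        fun θ => F.condl p h1Θ θ * F.condl p h21 (F.proj h1Θ θ)) ∧
    -- (4) if `Λ ≤ Θ₁ ≤ Θ` then `π_{Θ₁}(p_{Θ|Λ}) = p_{Θ₁|Λ}`
    (∀ (Θ₁ : F.Frame) (hΛΘ₁ : F.le Λ Θ₁) (hΘ₁Θ : F.le Θ₁ Θ),
      F.transport (F.condl p hΛΘ) Θ₁ = F.condl p hΛΘ₁) ∧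
    -- (5) if `Θ₁ ≤ Λ₁, Λ₂ ≤ Θ` then `π_{Λ₁}(p_{Θ|Λ₂} · p_{Λ₂|Θ₁}) = p_{Λ₁|Θ₁}`
    (∀ (Θ₁ Λ₁ Λ₂ : F.Frame) (h11 : F.le Θ₁ Λ₁) (h12 : F.le Θ₁ Λ₂)
        (h1Θ : F.le Λ₁ Θ) (h2Θ : F.le Λ₂ Θ),
      F.transport (fun θ => F.condl p h2Θ θ * F.condl p h12 (F.proj h2Θ θ)) Λ₁ =
        F.condl p h11) ∧
    -- (6) if `d(p₂) = Λ` and `Θ ≤ d(p₁)` then `(π_Θ(p₁) · p₂)_{Θ|Λ} = p₁_{Θ|Λ} · f_{p₂}`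
    (∀ (Δ' : F.Frame) (p₁ : F.Pot Δ') (hΘΔ' : F.le Θ Δ') (p₂ : F.Pot Λ),
      F.condl (fun θ => F.transport p₁ Θ θ * p₂ (F.proj hΛΘ θ)) hΛΘ =
        fun θ => F.condl p₁ hΛΘ θ * fpot p₂ (F.proj hΛΘ θ)) := by
  classical
  refine ⟨?_, ?_, ?_, ?_, ?_, ?_⟩
  · -- (1)
    funext θ
    unfold fpot condl
    by_cases hc : 0 < F.transport p Θ θ * (F.transport p Λ (F.proj hΛΘ θ))⁻¹
    · have ha : 0 < F.transport p Λ (F.proj hΛΘ θ) := by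
        rw [pos_iff_ne_zero] at hc ⊢
        intro h0; apply hc; rw [h0]; simp
      simp [hc, ha]
    · simp [hc]
  · -- (2)
    funext lam
    rw [transport_eq hΛΘ]
    unfold condl
    have hcongr : ∀ θ ∈ Finset.univ.filter (fun θ => F.proj hΛΘ θ = lam),
        F.transport p Θ θ * (F.transport p Λ (F.proj hΛΘ θ))⁻¹
          = F.transport p Θ θ * (F.transport p Λ lam)⁻¹ := by
      intro θ hθ
      simp only [Finset.mem_filter, Finset.mem_univ, true_and] at hθ
      rw [hθ]
    rw [Finset.sum_congr rfl hcongr, ← Finset.sum_mul,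
      ← transport_comp hΛΘ hΘΔ]
    rcases eq_or_ne (F.transport p Λ lam) 0 with h0 | h0
    · simp [fpot, h0]
    · rw [mul_inv_cancel₀ h0]
      simp [fpot, pos_iff_ne_zero, h0]
  · -- (3)
    exact fun Λ₁ Λ₂ h21 h1Θ => condl_mul p hΘΔ h21 h1Θ
  · -- (4)
    exact fun Θ₁ hΛΘ₁ hΘ₁Θ => transport_condl p hΘΔ hΛΘ hΛΘ₁ hΘ₁Θ
  · -- (5)
    intro Θ₁ Λ₁ Λ₂ h11 h12 h1Θ h2Θ
    rw [← condl_mul p hΘΔ h12 h2Θ]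
    exact transport_condl p hΘΔ (F.le_trans h12 h2Θ) h11 h1Θ
  · -- (6)
    intro Δ' p₁ hΘΔ' p₂
    have key : ∀ lam, F.transport
        (fun θ => F.transport p₁ Θ θ * p₂ (F.proj hΛΘ θ)) Λ lam
          = F.transport p₁ Λ lam * p₂ lam := by
      intro lam
      rw [transport_eq hΛΘ, transport_comp hΛΘ hΘΔ' p₁ lam, Finset.sum_mul]
      refine Finset.sum_congr rfl fun θ hθ => ?_
      simp only [Finset.mem_filter, Finset.mem_univ, true_and] at hθ
      rw [hθ]
    funext θ
    unfold condl
    rw [transport_self, key]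
    rcases eq_or_ne (p₂ (F.proj hΛΘ θ)) 0 with h0 | h0
    · simp [fpot, h0]
    · have hf : fpot p₂ (F.proj hΛΘ θ) = 1 := by
        simp [fpot, pos_iff_ne_zero, h0]
      rw [hf, mul_one, mul_inv, mul_comm (F.transport p₁ Λ (F.proj hΛΘ θ))⁻¹,
        ← mul_assoc, mul_assoc (F.transport p₁ Θ θ), mul_inv_cancel₀ h0,
        mul_one]

end
end FCF
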